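/- arXiv:1802.10006 — 8 statements merged into one kernel-verified Lean document; each statement's English description precedes it below -/
import Mathlib

section
/- Let X be a connected non-empty finite topological space and let A be a non-empty subspace of X, with inclusion map i : A → X. Then i is a Hurewicz cofibration if and only if there exists a continuous retraction r : X → A of i (i.e. r ∘ i = Id_A) such that i ∘ r ≤ Id_X in the pointwise specialization preorder. -/
open unitInterval

set_option autoImplicit false

universe u v

/-- The specialization preorder: `x ≤ y` iff every open set containing `y` contains `x`. -/
def specLE {X : Type*} [TopologicalSpace X] (x y : X) : Prop :=
  ∀ U : Set X, IsOpen U → y ∈ U → x ∈ U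

/-- A continuous map `i : A → X` is a (Hurewicz) cofibration iff it has the homotopy
extension property with respect to all topological spaces. -/
def IsCofibration {A : Type*} {X : Type*} [TopologicalSpace A] [TopologicalSpace X]
    (i : C(A, X)) : Prop :=
  ∀ (Z : Type v) [TopologicalSpace Z] (f : C(X, Z)) (H : C(A × I, Z)),
    (∀ a, H (a, 0) = f (i a)) →
    ∃ G : C(X × I, Z),
      (∀ x, G (x, 0) = f x) ∧ ∀ a t, G (i a, t) = H (a, t)

/-- `x` is a down beat point of the subspace `S`:
the set of points of `S` strictly below `x` has a maximum. -/
def IsDownBeatPoint {X : Type*} [TopologicalSpace X] (S : Set X) (x : X) : Prop :=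
  x ∈ S ∧ ∃ m ∈ S, m ≠ x ∧ specLE m x ∧
    ∀ z ∈ S, z ≠ x → specLE z x → specLE z m

/-- `T` is a dbp–retract of `S`: `T` is obtained from `S` by successively
removing down beat points. -/
inductive IsDbpRetract {X : Type*} [TopologicalSpace X] : Set X → Set X → Prop
  | refl (S : Set X) : IsDbpRetract S S
  | step {S T : Set X} (x : X) (hx : IsDownBeatPoint S x)
      (h : IsDbpRetract (S \ {x}) T) : IsDbpRetract S T

/-- The minimal open set containing `x` (in a finite space): the intersection of all
open sets containing `x`. -/
def minOpen {X : Type*} [TopologicalSpace X] (x : X) : Set X :=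
  ⋂₀ {U : Set X | IsOpen U ∧ x ∈ U}

/-- auxiliary small cylinder type -/
structure CylAux (n : ℕ) (P : Fin n → Prop) : Type where
  k : Fin n
  t : I
  ht : t = 0 ∨ P k

lemma minOpen_isOpen {X : Type u} [TopologicalSpace X] [Finite X] (x : X) :
    IsOpen (minOpen x) :=
  (Set.toFinite _).isOpen_sInter (fun _ hU => hU.1)

lemma mem_minOpen_iff {X : Type u} [TopologicalSpace X] {x y : X} :
    y ∈ minOpen x ↔ specLE y x := by
  constructor
  · intro h U hU hx
    exact h U ⟨hU, hx⟩
  · rintro h U ⟨hU, hx⟩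
    exact h U hU hx

lemma mem_minOpen_self {X : Type u} [TopologicalSpace X] (x : X) : x ∈ minOpen x :=
  mem_minOpen_iff.mpr (fun _ _ hx => hx)

lemma specLE_eq_t1 {X : Type u} {Y : Type*} [TopologicalSpace X] [TopologicalSpace Y]
    [T1Space Y] {g : X → Y} (hg : Continuous g) {x y : X} (h : specLE y x) : g y = g x := by
  by_contra hne
  have hx : x ∈ g ⁻¹' {g y}ᶜ := fun hh => hne (Set.eq_of_mem_singleton hh).symm
  have := h _ (isOpen_compl_singleton.preimage hg) hx
  exact this rfl

theorem backward_aux {X : Type u} [TopologicalSpace X] (A : Set X)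
    (r : C(X, A)) (hr : ∀ a : A, r (a : X) = a) (hle : ∀ x : X, specLE ((r x : X)) x) :
    IsCofibration.{v, u, u} (⟨Subtype.val, continuous_subtype_val⟩ : C(A, X)) := by
  intro Z _ f H hH0
  classical
  set K : X × I → Z := fun p => H (r p.1, p.2) with hKdef
  have hK : Continuous K :=
    H.continuous.comp ((r.continuous.comp continuous_fst).prodMk continuous_snd)
  set G : X × I → Z := fun p => if p.2 = 0 then f p.1 else K p with hGdef
  have hGc : Continuous G := by
    rw [continuous_def]
    intro W hW
    have hsnd : IsOpen {p : X × I | p.2 ≠ 0} :=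
      IsOpen.preimage continuous_snd isOpen_ne
    have hset : G ⁻¹' W =
        (K ⁻¹' W ∩ (fun p : X × I => f p.1) ⁻¹' W) ∪ (K ⁻¹' W ∩ {p : X × I | p.2 ≠ 0}) := by
      ext ⟨x, t⟩
      by_cases ht : t = 0
      · subst ht
        simp only [hGdef, Set.mem_preimage, if_pos rfl, Set.mem_union, Set.mem_inter_iff,
          Set.mem_setOf_eq, ne_eq, not_true_eq_false, and_false, or_false]
        constructor
        · intro hfx
          refine ⟨?_, hfx⟩
          show H (r x, 0) ∈ W
          rw [hH0]
          exact hle x _ (hW.preimage f.continuous) hfx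
        · exact fun h => h.2
      · simp only [hGdef, Set.mem_preimage, if_neg ht, Set.mem_union, Set.mem_inter_iff,
          Set.mem_setOf_eq, ne_eq, ht, not_false_eq_true, and_true]
        tauto
    rw [hset]
    exact ((hW.preimage hK).inter (hW.preimage (f.continuous.comp continuous_fst))).union
      ((hW.preimage hK).inter hsnd)
  refine ⟨⟨G, hGc⟩, fun x => ?_, fun a t => ?_⟩
  · show (if (0 : I) = 0 then f x else K (x, 0)) = f x
    rw [if_pos rfl]
  · show (if t = 0 then f (a : X) else K ((a : X), t)) = H (a, t)
    by_cases ht : t = 0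
    · subst ht
      rw [if_pos rfl, hH0 a]
      rfl
    · rw [if_neg ht]
      show H (r (a : X), t) = H (a, t)
      rw [hr a]


def cylMap {X : Type u} [TopologicalSpace X] (A : Set X) {n : ℕ} (e : X ≃ Fin n)
    (z : ULift.{v} (CylAux n (fun k => (e.symm k : X) ∈ A))) : X × I :=
  (e.symm z.down.k, z.down.t)

theorem forward_aux {X : Type u} [TopologicalSpace X] [Finite X] [ConnectedSpace X]
    (A : Set X) (hA : A.Nonempty)
    (hC : IsCofibration.{v, u, u} (⟨Subtype.val, continuous_subtype_val⟩ : C(A, X))) :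
    ∃ r : C(X, A), (∀ a : A, r (a : X) = a) ∧ ∀ x : X, specLE ((r x : X)) x := by
  obtain ⟨a₀, ha₀⟩ := hA
  cases nonempty_fintype X
  let e := Fintype.equivFin X
  letI : TopologicalSpace
      (ULift.{v} (CylAux (Fintype.card X) (fun k => (e.symm k : X) ∈ A))) :=
    TopologicalSpace.induced (cylMap.{u, v} A e) inferInstance
  have hpsi : Continuous (cylMap.{u, v} A e) := continuous_induced_dom
  have hfc : Continuous (fun x : X =>
      (⟨⟨e x, 0, Or.inl rfl⟩⟩ :
        ULift.{v} (CylAux (Fintype.card X) (fun k => (e.symm k : X) ∈ A)))) := by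
    rw [continuous_induced_rng]
    have heq : (cylMap.{u, v} A e ∘ fun x : X =>
        (⟨⟨e x, 0, Or.inl rfl⟩⟩ :
          ULift.{v} (CylAux (Fintype.card X) (fun k => (e.symm k : X) ∈ A)))) =
        fun x : X => (x, (0 : I)) := by
      funext x
      simp [cylMap]
    rw [heq]
    exact continuous_id.prodMk continuous_const
  have hHc : Continuous (fun p : A × I =>
      (⟨⟨e (p.1 : X), p.2, Or.inr (by simp)⟩⟩ :
        ULift.{v} (CylAux (Fintype.card X) (fun k => (e.symm k : X) ∈ A)))) := by
    rw [continuous_induced_rng]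
    have heq : (cylMap.{u, v} A e ∘ fun p : A × I =>
        (⟨⟨e (p.1 : X), p.2, Or.inr (by simp)⟩⟩ :
          ULift.{v} (CylAux (Fintype.card X) (fun k => (e.symm k : X) ∈ A)))) =
        fun p : A × I => ((p.1 : X), p.2) := by
      funext p
      simp [cylMap]
    rw [heq]
    exact (continuous_subtype_val.comp continuous_fst).prodMk continuous_snd
  obtain ⟨G, hG0, hGa⟩ := hC _ ⟨_, hfc⟩ ⟨_, hHc⟩ (fun a => rfl)
  simp only [ContinuousMap.coe_mk] at hG0 hGa
  have halpha : Continuous (fun p : X × I => (cylMap.{u, v} A e (G p)).1) :=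
    continuous_fst.comp (hpsi.comp G.continuous)
  have hbeta : Continuous (fun p : X × I => (cylMap.{u, v} A e (G p)).2) :=
    continuous_snd.comp (hpsi.comp G.continuous)
  have ha0 : ∀ x : X, (cylMap.{u, v} A e (G (x, 0))).1 = x := by
    intro x
    rw [hG0 x]
    exact e.symm_apply_apply x
  have haa : ∀ (a : A) (t : I), (cylMap.{u, v} A e (G ((a : X), t))).1 = (a : X) := by
    intro a t
    rw [hGa a t]
    exact e.symm_apply_apply _
  have hba : ∀ (a : A) (t : I), (cylMap.{u, v} A e (G ((a : X), t))).2 = t := by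
    intro a t
    rw [hGa a t]
    rfl
  have hmem : ∀ p : X × I,
      (cylMap.{u, v} A e (G p)).2 = 0 ∨ (cylMap.{u, v} A e (G p)).1 ∈ A :=
    fun p => (G p).down.ht
  have hbt : ∀ (t : I) (x : X), (cylMap.{u, v} A e (G (x, t))).2 = t := by
    intro t x
    have hlc : IsLocallyConstant (fun x : X => (cylMap.{u, v} A e (G (x, t))).2) := by
      rw [IsLocallyConstant.iff_exists_open]
      intro y
      refine ⟨minOpen y, minOpen_isOpen y, mem_minOpen_self y, fun z hz => ?_⟩
      exact specLE_eq_t1 (hbeta.comp (continuous_id.prodMk continuous_const))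
        (mem_minOpen_iff.mp hz)
    calc (cylMap.{u, v} A e (G (x, t))).2
        = (cylMap.{u, v} A e (G ((a₀ : X), t))).2 := hlc.apply_eq_of_preconnectedSpace x a₀
      _ = t := hba ⟨a₀, ha₀⟩ t
  have hSopen : IsOpen (⋂ x : X, {s : I | (cylMap.{u, v} A e (G (x, s))).1 ∈ minOpen x}) :=
    isOpen_iInter_of_finite fun x =>
      (minOpen_isOpen x).preimage (halpha.comp (Continuous.prodMk_right x))
  have h0S : (0 : I) ∈ ⋂ x : X, {s : I | (cylMap.{u, v} A e (G (x, s))).1 ∈ minOpen x} := by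
    rw [Set.mem_iInter]
    intro x
    show (cylMap.{u, v} A e (G (x, 0))).1 ∈ minOpen x
    rw [ha0]
    exact mem_minOpen_self x
  obtain ⟨t₀, htS, ht0⟩ : ∃ t ∈ ⋂ x : X,
      {s : I | (cylMap.{u, v} A e (G (x, s))).1 ∈ minOpen x}, t ≠ 0 := by
    by_contra h
    push_neg at h
    have hSeq : (⋂ x : X, {s : I | (cylMap.{u, v} A e (G (x, s))).1 ∈ minOpen x}) =
        {(0 : I)} :=
      subset_antisymm (fun t ht => h t ht) (by simpa using h0S)
    have hclopen : IsClopen ({(0 : I)} : Set I) := ⟨isClosed_singleton, hSeq ▸ hSopen⟩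
    rcases isClopen_iff.mp hclopen with h1 | h1
    · exact absurd h1 (Set.singleton_ne_empty _)
    · have h10 : (1 : I) ∈ ({(0 : I)} : Set I) := h1 ▸ Set.mem_univ _
      have h2 : (1 : I) = 0 := h10
      have h3 := congrArg Subtype.val h2
      norm_num at h3
  have hmemA : ∀ x : X, (cylMap.{u, v} A e (G (x, t₀))).1 ∈ A := by
    intro x
    rcases hmem (x, t₀) with h | h
    · exact absurd ((hbt t₀ x).symm.trans h) ht0
    · exact h
  refine ⟨⟨fun x => ⟨(cylMap.{u, v} A e (G (x, t₀))).1, hmemA x⟩, ?_⟩, fun a => ?_, fun x => ?_⟩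
  · exact (halpha.comp (continuous_id.prodMk continuous_const)).subtype_mk _
  · exact Subtype.ext (haa a t₀)
  · exact mem_minOpen_iff.mp (Set.mem_iInter.mp htS x)

/-- Let `X` be a connected non-empty finite topological space and `A` a
non-empty subspace. The inclusion `i : A ↪ X` is a Hurewicz cofibration iff there is a
continuous retraction `r : X → A` of `i` with `i ∘ r ≤ Id_X` pointwise in the
specialization preorder. -/
theorem cofibration_iff_exists_retraction_le_id
    {X : Type u} [TopologicalSpace X] [Finite X] [ConnectedSpace X]
    (A : Set X) (hA : A.Nonempty) :
    IsCofibration (⟨Subtype.val, continuous_subtype_val⟩ : C(A, X)) ↔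
      ∃ r : C(X, A), (∀ a : A, r (a : X) = a) ∧ ∀ x : X, specLE ((r x : X)) x := by
  constructor
  · exact fun hC => forward_aux A hA hC
  · rintro ⟨r, hr, hle⟩
    exact backward_aux A r hr hle
end

section
/- Let X be a connected finite T₀-space and let A be a non-empty subspace of X. Then the inclusion map i : A → X is a Hurewicz cofibration if and only if A is a dbp–retract of X. -/
open unitInterval

set_option autoImplicit false

universe u v

set_option linter.unusedSectionVars false

open Filter Topology

section Basics

variable {Y : Type*} [TopologicalSpace Y]

lemma specLE_iff_specializes {x y : Y} : specLE x y ↔ x ⤳ y := by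
  rw [specializes_iff_forall_open]; rfl

lemma specLE.refl (x : Y) : specLE x x := fun _ _ h => h

lemma specLE.trans {x y z : Y} (h1 : specLE x y) (h2 : specLE y z) : specLE x z :=
  fun U hU hz => h1 U hU (h2 U hU hz)

lemma specLE.antisymm [T0Space Y] {x y : Y} (h1 : specLE x y) (h2 : specLE y x) : x = y :=
  ((specLE_iff_specializes.1 h1).antisymm (specLE_iff_specializes.1 h2)).eq

lemma mem_minOpen_iff_s1 {z x : Y} : z ∈ minOpen x ↔ specLE z x := by
  simp only [minOpen, Set.mem_sInter, Set.mem_setOf_eq, specLE]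
  exact ⟨fun h U hU hx => h U ⟨hU, hx⟩, fun h U hU => h U hU.1 hU.2⟩

lemma specLE_subtype {S : Set Y} {a b : ↥S} : specLE a b ↔ specLE (a : Y) (b : Y) := by
  constructor
  · intro h U hU hbU
    exact h (Subtype.val ⁻¹' U) (hU.preimage continuous_subtype_val) hbU
  · intro h V hV hbV
    obtain ⟨U, hU, rfl⟩ := isOpen_induced_iff.1 hV
    exact h U hU hbV

variable [Finite Y]

lemma isOpen_minOpen (x : Y) : IsOpen (minOpen x) :=
  Set.Finite.isOpen_sInter (Set.toFinite _) (fun _ ht => ht.1)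

lemma self_mem_minOpen (x : Y) : x ∈ minOpen x := mem_minOpen_iff_s1.2 (specLE.refl x)

lemma nhds_eq_principal_minOpen (x : Y) : 𝓝 x = 𝓟 (minOpen x) := by
  apply le_antisymm
  · exact le_principal_iff.2 ((isOpen_minOpen x).mem_nhds (self_mem_minOpen x))
  · intro s hs
    obtain ⟨t, hts, ht, hxt⟩ := mem_nhds_iff.1 hs
    exact Filter.mem_principal.2 (fun z hz => hts (mem_minOpen_iff_s1.1 hz _ ht hxt))

lemma minOpen_mem_nhds (x : Y) : minOpen x ∈ 𝓝 x :=
  (isOpen_minOpen x).mem_nhds (self_mem_minOpen x)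

lemma isOpen_of_downClosed {U : Set Y} (h : ∀ y ∈ U, ∀ z, specLE z y → z ∈ U) : IsOpen U := by
  rw [isOpen_iff_mem_nhds]
  intro x hx
  rw [nhds_eq_principal_minOpen, Filter.mem_principal]
  exact fun z hz => h x hx z (mem_minOpen_iff_s1.1 hz)

lemma cyl_helper {A' : Type*} [TopologicalSpace A'] [Finite A'] {Z : Type*} [TopologicalSpace Z]
    (H : C(A' × I, Z)) {W : Set Z} (hW : IsOpen W) {a : A'} {t : I} (h : H (a, t) ∈ W) :
    ∃ J ∈ 𝓝 t, ∀ b : A', specLE b a → ∀ s ∈ J, H (b, s) ∈ W := by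
  have hmem : H ⁻¹' W ∈ 𝓝 (a, t) := (hW.preimage H.continuous).mem_nhds h
  rw [mem_nhds_prod_iff] at hmem
  obtain ⟨M, hM, J, hJ, hsub⟩ := hmem
  refine ⟨J, hJ, fun b hb s hs => hsub (Set.mk_mem_prod ?_ hs)⟩
  rw [nhds_eq_principal_minOpen, Filter.mem_principal] at hM
  exact hM (mem_minOpen_iff_s1.2 hb)

end Basics

section Step

variable {X : Type u} [TopologicalSpace X] [Finite X]

lemma stepCofib {S : Set X} {x : X}
    (hxS : x ∈ S) {m : X} (hmS : m ∈ S) (hmx : m ≠ x) (hm : specLE m x)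
    (hmax : ∀ z ∈ S, z ≠ x → specLE z x → specLE z m) :
    IsCofibration.{v}
      (⟨Set.inclusion Set.diff_subset, continuous_inclusion _⟩ : C(↥(S \ {x}), ↥S)) := by
  classical
  intro Z _ f H hH
  have hmA : m ∈ S \ {x} := ⟨hmS, hmx⟩
  set m' : ↥(S \ {x}) := ⟨m, hmA⟩ with hm'def
  set G0 : ↥S × I → Z := fun p =>
    if h : (p.1 : X) = x then (if p.2 = 0 then f p.1 else H (m', p.2))
    else H (⟨(p.1 : X), ⟨p.1.2, h⟩⟩, p.2) with hG0
  have hne : IsOpen {s : I | s ≠ 0} := isOpen_ne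
  have hcont : Continuous G0 := by
    rw [continuous_iff_continuousAt]
    rintro ⟨y, t⟩
    rw [ContinuousAt, Filter.tendsto_def]
    intro s hs
    obtain ⟨W, hWs, hW, hmemW⟩ := mem_nhds_iff.1 hs
    have key : ∃ J ∈ 𝓝 t, ∀ z : ↥S, specLE z y → ∀ u ∈ J, G0 (z, u) ∈ W := by
      by_cases hyx : (y : X) = x
      · by_cases ht : t = 0
        · -- G0 (y,t) = f y
          have hGp : G0 (y, t) = f y := by simp [hG0, hyx, ht]
          have hmemW' : f y ∈ W := by rw [← hGp]; exact hmemW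
          have hfW : ∀ z : ↥S, specLE z y → f z ∈ W :=
            fun z hz => hz _ (hW.preimage f.continuous) hmemW'
          have hb : ∀ b : ↥(S \ {x}), ∃ J, J ∈ 𝓝 (0 : I) ∧
              (specLE (b : X) x → ∀ u ∈ J, H (b, u) ∈ W) := by
            intro b
            by_cases hbx : specLE (b : X) x
            · have hby : specLE (⟨(b : X), b.2.1⟩ : ↥S) y :=
                specLE_subtype.2 (by rw [hyx]; exact hbx)
              have hHb : H (b, 0) ∈ W := by
                rw [hH b]; exact hfW ⟨(b : X), b.2.1⟩ hby
              obtain ⟨J, hJ, hP⟩ := cyl_helper H hW hHb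
              exact ⟨J, hJ, fun _ u hu => hP b (specLE.refl _) u hu⟩
            · exact ⟨Set.univ, Filter.univ_mem, fun h => absurd h hbx⟩
          choose Js hJs hPs using hb
          refine ⟨⋂ b, Js b, ht ▸ Filter.iInter_mem.2 hJs, ?_⟩
          intro z hzy u huJ
          by_cases hzx : (z : X) = x
          · by_cases hu0 : u = 0
            · have : G0 (z, u) = f z := by simp [hG0, hzx, hu0]
              rw [this]; exact hfW z hzy
            · have : G0 (z, u) = H (m', u) := by simp [hG0, hzx, hu0]
              rw [this]; exact hPs m' hm u (Set.mem_iInter.1 huJ m')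
          · have : G0 (z, u) = H (⟨(z : X), ⟨z.2, hzx⟩⟩, u) := by simp [hG0, hzx]
            rw [this]
            exact hPs ⟨(z : X), ⟨z.2, hzx⟩⟩ (hyx ▸ specLE_subtype.1 hzy) u
              (Set.mem_iInter.1 huJ _)
        · -- G0 (y,t) = H (m', t)
          have hGp : G0 (y, t) = H (m', t) := by simp [hG0, hyx, ht]
          have hmemW' : H (m', t) ∈ W := by rw [← hGp]; exact hmemW
          obtain ⟨J, hJ, hP⟩ := cyl_helper H hW hmemW'
          refine ⟨J ∩ {s : I | s ≠ 0}, Filter.inter_mem hJ (hne.mem_nhds ht), ?_⟩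
          rintro z hzy u ⟨huJ, hu0m⟩
          have hu0 : u ≠ 0 := hu0m
          by_cases hzx : (z : X) = x
          · have : G0 (z, u) = H (m', u) := by simp [hG0, hzx, hu0]
            rw [this]; exact hP m' (specLE.refl _) u huJ
          · have hzlex : specLE (z : X) x := hyx ▸ specLE_subtype.1 hzy
            have hzm : specLE (z : X) m := hmax z z.2 hzx hzlex
            have : G0 (z, u) = H (⟨(z : X), ⟨z.2, hzx⟩⟩, u) := by simp [hG0, hzx]
            rw [this]
            exact hP ⟨(z : X), ⟨z.2, hzx⟩⟩ (specLE_subtype.2 hzm) u huJ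
      · -- y ≠ x : G0 (y,t) = H (y', t)
        have hyA : (y : X) ∈ S \ {x} := ⟨y.2, hyx⟩
        have hGp : G0 (y, t) = H (⟨(y : X), hyA⟩, t) := by simp [hG0, hyx]
        have hmemW' : H (⟨(y : X), hyA⟩, t) ∈ W := by rw [← hGp]; exact hmemW
        obtain ⟨J, hJ, hP⟩ := cyl_helper H hW hmemW'
        have main : ∀ z : ↥S, specLE z y → ∀ u ∈ J, u ≠ 0 ∨ (z : X) ≠ x → G0 (z, u) ∈ W := by
          intro z hzy u huJ hcase
          by_cases hzx : (z : X) = x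
          · have hu0 : u ≠ 0 := hcase.resolve_right (fun h => h hzx)
            have hxy : specLE x (y : X) := hzx ▸ specLE_subtype.1 hzy
            have hmy : specLE m (y : X) := hm.trans hxy
            have : G0 (z, u) = H (m', u) := by simp [hG0, hzx, hu0]
            rw [this]; exact hP m' (specLE_subtype.2 hmy) u huJ
          · have : G0 (z, u) = H (⟨(z : X), ⟨z.2, hzx⟩⟩, u) := by simp [hG0, hzx]
            rw [this]
            exact hP ⟨(z : X), ⟨z.2, hzx⟩⟩
              (specLE_subtype.2 (show specLE (z : X) (y : X) from specLE_subtype.1 hzy)) u huJ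
        by_cases ht : t = 0
        · refine ⟨J, hJ, ?_⟩
          intro z hzy u huJ
          by_cases hzx : (z : X) = x
          · by_cases hu0 : u = 0
            · -- G0 (z,u) = f z ; f y ∈ W
              have hfy : f y ∈ W := by
                have h1 : H (⟨(y : X), hyA⟩, 0) = f (Set.inclusion Set.diff_subset ⟨(y : X), hyA⟩) :=
                  hH _
                have h2 : Set.inclusion (Set.diff_subset : S \ {x} ⊆ S) ⟨(y : X), hyA⟩ = y :=
                  Subtype.ext rfl
                have h3 : H (⟨(y : X), hyA⟩, 0) ∈ W := by
                  rw [← ht, ← hGp]; exact hmemW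
                rw [h1, h2] at h3; exact h3
              have : G0 (z, u) = f z := by simp [hG0, hzx, hu0]
              rw [this]
              exact hzy _ (hW.preimage f.continuous) hfy
            · exact main z hzy u huJ (Or.inl hu0)
          · exact main z hzy u huJ (Or.inr hzx)
        · refine ⟨J ∩ {s : I | s ≠ 0}, Filter.inter_mem hJ (hne.mem_nhds ht), ?_⟩
          rintro z hzy u ⟨huJ, hu0m⟩
          exact main z hzy u huJ (Or.inl hu0m)
    obtain ⟨J, hJ, hP⟩ := key
    have hsub : (minOpen y) ×ˢ J ⊆ G0 ⁻¹' W := by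
      rintro ⟨z, u⟩ ⟨hz, hu⟩
      exact hP z (mem_minOpen_iff_s1.1 hz) u hu
    rw [nhds_prod_eq]
    exact Filter.mem_of_superset
      (Filter.mem_of_superset (Filter.prod_mem_prod (minOpen_mem_nhds y) hJ) hsub)
      (Set.preimage_mono hWs)
  refine ⟨⟨G0, hcont⟩, ?_, ?_⟩
  · intro p
    show G0 (p, 0) = f p
    by_cases hp : (p : X) = x
    · simp [hG0, hp]
    · have : G0 (p, 0) = H (⟨(p : X), ⟨p.2, hp⟩⟩, 0) := by simp [hG0, hp]
      rw [this, hH]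
      exact congrArg f (Subtype.ext rfl)
  · intro a t
    have hax : (a : X) ≠ x := a.2.2
    show G0 (Set.inclusion Set.diff_subset a, t) = H (a, t)
    have : G0 (Set.inclusion Set.diff_subset a, t) = H (⟨(a : X), ⟨a.2.1, hax⟩⟩, t) := by
      simp [hG0, hax]
    rw [this]

end Step

section Rest

lemma IsCofibration.comp {A B C' : Type*} [TopologicalSpace A] [TopologicalSpace B]
    [TopologicalSpace C'] {i : C(A, B)} {j : C(B, C')}
    (hi : IsCofibration.{v} i) (hj : IsCofibration.{v} j) :
    IsCofibration.{v} (j.comp i) := by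
  intro Z _ f H hH
  obtain ⟨G1, hG1a, hG1b⟩ := hi Z (f.comp j) H (fun a => hH a)
  obtain ⟨G, hGa, hGb⟩ := hj Z f G1 hG1a
  exact ⟨G, hGa, fun a t => (hGb (i a) t).trans (hG1b a t)⟩

lemma IsDbpRetract.subset {X : Type u} [TopologicalSpace X] {S T : Set X}
    (h : IsDbpRetract S T) : T ⊆ S := by
  induction h with
  | refl => exact subset_rfl
  | step x hx h ih => exact ih.trans Set.diff_subset

lemma dbp_to_cofib {X : Type u} [TopologicalSpace X] [Finite X] {S T : Set X}
    (h : IsDbpRetract S T) :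
    ∀ (hsub : T ⊆ S),
      IsCofibration.{v} (⟨Set.inclusion hsub, continuous_inclusion hsub⟩ : C(↥T, ↥S)) := by
  induction h with
  | refl S =>
      intro hsub Z _ f H hH
      refine ⟨H, fun p => ?_, fun a t => ?_⟩
      · exact (hH p).trans (congrArg f (Subtype.ext rfl))
      · exact congrArg (fun b => H (b, t)) (Subtype.ext rfl)
  | @step S T x hx h ih =>
      intro hsub
      obtain ⟨hxS, m, hmS, hmx, hm, hmax⟩ := hx
      have hTsub : T ⊆ S \ {x} := h.subset
      have hstep := stepCofib hxS hmS hmx hm hmax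
      have hcomp := IsCofibration.comp (ih hTsub) hstep
      have heq : (⟨Set.inclusion hsub, continuous_inclusion hsub⟩ : C(↥T, ↥S)) =
          (⟨Set.inclusion Set.diff_subset, continuous_inclusion _⟩ :
            C(↥(S \ {x}), ↥S)).comp
            ⟨Set.inclusion hTsub, continuous_inclusion hTsub⟩ :=
        ContinuousMap.ext fun a => Subtype.ext rfl
      rw [heq]
      exact hcomp

lemma dbp_comb {X : Type u} [TopologicalSpace X] [Finite X] [T0Space X]
    (A : Set X) (ρ : X → X) (h1 : ∀ y, ρ y ∈ A) (h2 : ∀ y, specLE (ρ y) y)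
    (h3 : ∀ a ∈ A, ρ a = a) (h4 : ∀ y z, specLE y z → specLE (ρ y) (ρ z)) :
    ∀ (n : ℕ) (S : Set X), (S \ A).ncard ≤ n → A ⊆ S → IsDbpRetract S A := by
  intro n
  induction n with
  | zero =>
      intro S hcard hAS
      have hempty : S \ A = ∅ := (Set.ncard_eq_zero (Set.toFinite _)).1 (Nat.le_zero.1 hcard)
      have hSA : S = A := by
        apply Set.Subset.antisymm _ hAS
        intro z hz
        by_contra hzA
        exact absurd (Set.mem_empty_iff_false z).1 (by rw [← hempty]; exact fun h => h ⟨hz, hzA⟩)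
      rw [hSA]
      exact IsDbpRetract.refl A
  | succ n ih =>
      intro S hcard hAS
      by_cases hSA : S ⊆ A
      · rw [Set.Subset.antisymm hSA hAS]
        exact IsDbpRetract.refl A
      · obtain ⟨w, hwS, hwA⟩ := Set.not_subset.1 hSA
        have hne : (S \ A).Nonempty := ⟨w, hwS, hwA⟩
        set rlt : X → X → Prop := fun a b => specLE a b ∧ a ≠ b with hrlt
        haveI : IsTrans X rlt :=
          ⟨fun a b c hab hbc =>
            ⟨hab.1.trans hbc.1, fun h => hab.2 (specLE.antisymm hab.1 (h ▸ hbc.1))⟩⟩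
        haveI : IsIrrefl X rlt := ⟨fun a h => h.2 rfl⟩
        obtain ⟨x, hx, hmin⟩ :=
          (Finite.wellFounded_of_trans_of_irrefl rlt).has_min (S \ A) hne
        have hdbp : IsDownBeatPoint S x := by
          refine ⟨hx.1, ρ x, hAS (h1 x), fun hc => hx.2 (hc ▸ h1 x), h2 x, ?_⟩
          intro z hzS hzx hzle
          have hzA : z ∈ A := by
            by_contra hzA
            exact hmin z ⟨hzS, hzA⟩ ⟨hzle, hzx⟩
          have := h4 z x hzle
          rwa [h3 z hzA] at this
        refine IsDbpRetract.step x hdbp (ih (S \ {x}) ?_ ?_)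
        · have hd : (S \ {x}) \ A = (S \ A) \ {x} := by
            ext z; simp only [Set.mem_diff, Set.mem_singleton_iff]; tauto
          rw [hd, Set.ncard_diff_singleton_of_mem hx]
          omega
        · intro a ha
          exact ⟨hAS ha, fun h => hx.2 (by rw [Set.mem_singleton_iff] at h; rw [← h]; exact ha)⟩

end Rest

section Forward

lemma forward_dir {X : Type u} [TopologicalSpace X] [Finite X] [T0Space X] [ConnectedSpace X]
    (A : Set X) (hA : A.Nonempty)
    (hcof : IsCofibration.{v} (⟨Subtype.val, continuous_subtype_val⟩ : C(A, X))) :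
    IsDbpRetract (Set.univ : Set X) A := by
  classical
  obtain ⟨n, ⟨e⟩⟩ := Finite.exists_equiv_fin X
  letI tN : TopologicalSpace (Fin n) := TopologicalSpace.coinduced e inferInstance
  have hecont : Continuous (e : X → Fin n) := continuous_coinduced_rng
  have hesymm : Continuous (e.symm : Fin n → X) := by
    rw [continuous_def]
    intro U hU
    have h1 : (e.symm : Fin n → X) ⁻¹' U = e '' U := (e.image_eq_preimage_symm U).symm
    rw [h1]
    exact isOpen_coinduced.2 (by rw [e.preimage_image]; exact hU)
  set Z0 : Type := {p : Fin n × I // p.2 = 0 ∨ e.symm p.1 ∈ A} with hZ0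
  set f : C(X, ULift.{v} Z0) :=
    ⟨fun y => ⟨⟨(e y, 0), Or.inl rfl⟩⟩,
      continuous_uliftUp.comp
        ((Continuous.subtype_mk (hecont.prodMk continuous_const) _))⟩ with hf
  set Hc : C(↥A × I, ULift.{v} Z0) :=
    ⟨fun p => ⟨⟨(e p.1.1, p.2), Or.inr (by simp [p.1.2])⟩⟩,
      continuous_uliftUp.comp
        (Continuous.subtype_mk
          ((hecont.comp (continuous_subtype_val.comp continuous_fst)).prodMk
            continuous_snd) _)⟩ with hHc
  obtain ⟨G, hG0, hGA⟩ := hcof (ULift.{v} Z0) f Hc (fun a => rfl)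
  have hGA' : ∀ (a : ↥A) (t : I), G ((a : X), t) = Hc (a, t) := hGA
  set r : X → I → X := fun y t => e.symm (G (y, t)).down.1.1 with hr
  set sg : X → I → I := fun y t => (G (y, t)).down.1.2 with hsgdef
  have hr0 : ∀ y, r y 0 = y := by
    intro y
    simp only [hr, hG0 y]
    exact e.symm_apply_apply y
  have hsgA : ∀ (a : ↥A) (t : I), sg (a : X) t = t := by
    intro a t
    simp only [hsgdef, hGA' a t]
    rfl
  have hrA : ∀ (a : ↥A) (t : I), r (a : X) t = (a : X) := by
    intro a t
    simp only [hr, hGA' a t]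
    exact e.symm_apply_apply _
  have hmem : ∀ y t, sg y t ≠ 0 → r y t ∈ A := by
    intro y t h
    rcases (G (y, t)).down.2 with h0 | hA'
    · exact absurd h0 h
    · exact hA'
  have hspec : ∀ y z t, specLE y z → specLE (r y t) (r z t) ∧ sg y t = sg z t := by
    intro y z t h
    have h1 : ((y, t) : X × I) ⤳ (z, t) :=
      (specLE_iff_specializes.1 h).prod specializes_rfl
    have h4 : ((G (y, t)).down : Fin n × I) ⤳ ((G (z, t)).down : Fin n × I) :=
      ((h1.map G.continuous).map continuous_uliftDown).map continuous_subtype_val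
    constructor
    · exact specLE_iff_specializes.2 (h4.fst.map hesymm)
    · exact h4.snd.eq
  have hsgeq : ∀ y t, sg y t = t := by
    intro y t
    obtain ⟨a0, ha0⟩ := hA
    have hCopen : IsOpen {z : X | sg z t = t} := by
      apply isOpen_of_downClosed
      intro z hz w hw
      rw [Set.mem_setOf_eq, (hspec w z t hw).2]
      exact hz
    have hCclosed : IsClosed {z : X | sg z t = t} := by
      rw [← isOpen_compl_iff]
      apply isOpen_of_downClosed
      intro z hz w hw hwC
      exact hz (by rw [Set.mem_setOf_eq, ← (hspec w z t hw).2]; exact hwC)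
    have huniv : {z : X | sg z t = t} = Set.univ :=
      IsClopen.eq_univ ⟨hCclosed, hCopen⟩ ⟨a0, hsgA ⟨a0, ha0⟩ t⟩
    have : y ∈ {z : X | sg z t = t} := huniv ▸ Set.mem_univ y
    exact this
  have hO : ∀ y : X, IsOpen {t : I | r y t ∈ minOpen y} ∧ (0 : I) ∈ {t : I | r y t ∈ minOpen y} := by
    intro y
    constructor
    · have hc : Continuous (fun t : I => r y t) :=
        hesymm.comp (continuous_fst.comp (continuous_subtype_val.comp
          (continuous_uliftDown.comp (G.continuous.comp
            (continuous_const.prodMk continuous_id)))))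
      exact (isOpen_minOpen y).preimage hc
    · simp only [Set.mem_setOf_eq, hr0 y]
      exact self_mem_minOpen y
  have hUopen : IsOpen (⋂ y : X, {t : I | r y t ∈ minOpen y}) :=
    isOpen_iInter_of_finite (fun y => (hO y).1)
  have hU0 : (0 : I) ∈ ⋂ y : X, {t : I | r y t ∈ minOpen y} :=
    Set.mem_iInter.2 fun y => (hO y).2
  obtain ⟨ε, hε, hball⟩ := Metric.isOpen_iff.1 hUopen 0 hU0
  set t0 : I := ⟨min (ε / 2) 1, le_min (by positivity) zero_le_one, min_le_right _ _⟩ with ht0def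
  have ht0U : t0 ∈ ⋂ y : X, {t : I | r y t ∈ minOpen y} := by
    apply hball
    have hd : dist t0 (0 : I) = min (ε / 2) 1 := by
      rw [Subtype.dist_eq, Real.dist_eq]
      show |min (ε / 2) 1 - 0| = _
      rw [sub_zero, abs_of_nonneg (le_min (by positivity) zero_le_one)]
    rw [Metric.mem_ball, hd]
    exact lt_of_le_of_lt (min_le_left _ _) (half_lt_self hε)
  have ht0 : t0 ≠ 0 := by
    intro hc
    have h0 : (min (ε / 2) 1 : ℝ) = 0 := congrArg Subtype.val hc
    have hpos : (0 : ℝ) < min (ε / 2) 1 := lt_min (by positivity) one_pos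
    linarith
  set ρ : X → X := fun y => r y t0 with hρ
  have hρA : ∀ y, ρ y ∈ A := fun y => hmem y t0 (by rw [hsgeq]; exact ht0)
  have hρle : ∀ y, specLE (ρ y) y := fun y =>
    mem_minOpen_iff_s1.1 (Set.mem_iInter.1 ht0U y)
  have hρfix : ∀ a ∈ A, ρ a = a := fun a ha => hrA ⟨a, ha⟩ t0
  have hρmono : ∀ y z, specLE y z → specLE (ρ y) (ρ z) := fun y z h => (hspec y z t0 h).1
  exact dbp_comb A ρ hρA hρle hρfix hρmono ((Set.univ \ A).ncard) Set.univ le_rfl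
    (Set.subset_univ A)

end Forward

/-- Let `X` be a connected finite T₀-space and `A` a non-empty subspace.
The inclusion `i : A ↪ X` is a Hurewicz cofibration iff `A` is a dbp–retract of `X`. -/
theorem cofibration_iff_dbpRetract
    {X : Type u} [TopologicalSpace X] [Finite X] [T0Space X] [ConnectedSpace X]
    (A : Set X) (hA : A.Nonempty) :
    IsCofibration (⟨Subtype.val, continuous_subtype_val⟩ : C(A, X)) ↔
      IsDbpRetract (Set.univ : Set X) A := by
  constructor
  · exact forward_dir A hA
  · intro h
    intro Z _ f H hH
    have hc := dbp_to_cofib h (Set.subset_univ A)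
    obtain ⟨G', hG'0, hG'A⟩ :=
      hc Z (f.comp ⟨Subtype.val, continuous_subtype_val⟩) H (fun a => hH a)
    refine ⟨G'.comp ⟨fun p => (⟨p.1, Set.mem_univ p.1⟩, p.2),
      ((continuous_fst.subtype_mk _).prodMk continuous_snd)⟩, ?_, ?_⟩
    · intro y
      exact hG'0 ⟨y, Set.mem_univ y⟩
    · intro a t
      exact hG'A a t
end

section
/- Let X be a finite T₀-space, let A be a subspace of X with inclusion map i : A → X, and suppose r₁, r₂ : X → A are continuous retractions of i (i.e. r_k ∘ i = Id_A) such that i ∘ r_k ≤ Id_X for k = 1, 2, where ≤ is the pointwise specialization order. Then r₁ = r₂. -/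
open unitInterval

set_option autoImplicit false

universe u v

/-- Let `X` be a finite T₀-space and `A ⊆ X` a subspace. Any two
continuous retractions `r₁, r₂ : X → A` of the inclusion with `i ∘ r_k ≤ Id_X` in the
pointwise specialization order coincide. -/
theorem retraction_le_id_unique
    {X : Type u} [TopologicalSpace X] [Finite X] [T0Space X] (A : Set X)
    (r₁ r₂ : C(X, A))
    (h₁ : ∀ a : A, r₁ (a : X) = a) (h₂ : ∀ a : A, r₂ (a : X) = a)
    (hle₁ : ∀ x : X, specLE ((r₁ x : X)) x) (hle₂ : ∀ x : X, specLE ((r₂ x : X)) x) :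
    r₁ = r₂ := by
  have key : ∀ (r₁ r₂ : C(X, A)), (∀ a : A, r₂ (a : X) = a) →
      (∀ x : X, specLE ((r₁ x : X)) x) → ∀ x : X, ((r₁ x : X)) ⤳ ((r₂ x : X)) := by
    intro r₁ r₂ h₂ hle₁ x
    have h : ((r₁ x : X)) ⤳ x := specializes_iff_forall_open.2 (hle₁ x)
    have := (h.map r₂.continuous)
    rw [h₂ (r₁ x)] at this
    exact this.map continuous_subtype_val
  ext x
  have := ((key r₁ r₂ h₂ hle₁ x).antisymm (key r₂ r₁ h₁ hle₂ x)).eq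
  exact congrArg Subtype.val (Subtype.ext this)
end

section
/- Let X be a finite T₀-space and let f : X → X be a continuous function with f ≤ Id_X in the pointwise specialization order. Then there exists N such that f^N = f^{N+1}; writing f^∞ = f^N for such N, the following hold: f^∞ ≤ f ≤ Id_X, f^∞ ∘ f^∞ = f^∞, the image f^∞(X) is a dbp–retract of X, and for every x ∈ X one has x ∈ f^∞(X) if and only if f(x) = x. -/
open unitInterval

set_option autoImplicit false

universe u v

section Aux

variable {X : Type u} [TopologicalSpace X]

lemma specLE_refl (x : X) : specLE x x := fun _ _ h => h

lemma specLE_trans {x y z : X} (h1 : specLE x y) (h2 : specLE y z) : specLE x z :=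
  fun U hU hz => h1 U hU (h2 U hU hz)

lemma specLE_antisymm [T0Space X] {x y : X} (h1 : specLE x y) (h2 : specLE y x) : x = y := by
  have : Inseparable x y := by
    rw [inseparable_iff_forall_isOpen]
    exact fun U hU => ⟨fun hx => h2 U hU hx, fun hy => h1 U hU hy⟩
  exact this.eq

lemma specLE_mono {g : X → X} (hg : Continuous g) {a b : X} (h : specLE a b) :
    specLE (g a) (g b) := fun U hU hbU => h (g ⁻¹' U) (hU.preimage hg) hbU

lemma dbp_aux [Finite X] [T0Space X] (g : X → X)
    (hle : ∀ x, specLE (g x) x)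
    (hmono : ∀ a b, specLE a b → specLE (g a) (g b))
    (hidem : ∀ x, g (g x) = g x) :
    ∀ (n : ℕ) (S : Set X), (S \ Set.range g).ncard ≤ n → Set.range g ⊆ S →
      IsDbpRetract S (Set.range g) := by
  intro n
  induction n with
  | zero =>
    intro S hcard hsub
    have hD : S \ Set.range g = ∅ :=
      (Set.ncard_eq_zero (Set.toFinite _)).mp (Nat.le_zero.mp hcard)
    have : S = Set.range g := subset_antisymm (Set.diff_eq_empty.mp hD) hsub
    rw [this]
    exact IsDbpRetract.refl _
  | succ n ih =>
    intro S hcard hsub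
    by_cases hD : S \ Set.range g = ∅
    · have : S = Set.range g := subset_antisymm (Set.diff_eq_empty.mp hD) hsub
      rw [this]
      exact IsDbpRetract.refl _
    · letI : PartialOrder X :=
        { le := specLE
          le_refl := specLE_refl
          le_trans := fun _ _ _ => specLE_trans
          le_antisymm := fun _ _ h1 h2 => specLE_antisymm h1 h2 }
      obtain ⟨x, hxD, hmin⟩ : ∃ x ∈ S \ Set.range g, ∀ z ∈ S \ Set.range g,
          id z ≤ id x → id x = id z := by
        obtain ⟨x, hxD, hm⟩ := Set.Finite.exists_minimalFor id (S \ Set.range g)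
          (Set.toFinite _) (Set.nonempty_iff_ne_empty.mpr hD)
        exact ⟨x, hxD, fun z hz hzx => le_antisymm (hm hz hzx) hzx⟩
      have hxS : x ∈ S := hxD.1
      have hxr : x ∉ Set.range g := hxD.2
      have hgx : g x ∈ S := hsub ⟨x, rfl⟩
      have hx : IsDownBeatPoint S x := by
        refine ⟨hxS, g x, hgx, ?_, hle x, ?_⟩
        · intro h; exact hxr ⟨x, h⟩
        · intro z hzS hzx hzle
          by_cases hzr : z ∈ Set.range g
          · have hz' : g z = z := by
              obtain ⟨w, rfl⟩ := hzr; exact hidem w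
            have := hmono z x hzle
            rwa [hz'] at this
          · exact absurd (hmin z ⟨hzS, hzr⟩ hzle).symm hzx
      refine IsDbpRetract.step x hx (ih (S \ {x}) ?_ ?_)
      · have heq : (S \ {x}) \ Set.range g = (S \ Set.range g) \ {x} :=
          Set.diff_diff_comm
        rw [heq]
        have := Set.ncard_diff_singleton_lt_of_mem hxD (Set.toFinite _)
        omega
      · intro y hy
        exact ⟨hsub hy, fun h => hxr (h ▸ hy)⟩

end Aux

/-- Let `X` be a finite T₀-space and `f : X → X` continuous with
`f ≤ Id_X` pointwise in the specialization order. Then some iterate of `f` stabilizes: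
`f^N = f^{N+1}` for some `N`, and for any such `N` (writing `f^∞ = f^N`):
`f^∞ ≤ f ≤ Id_X`, `f^∞ ∘ f^∞ = f^∞`, the image `f^∞(X)` is a dbp–retract of `X`, and
`x ∈ f^∞(X)` iff `f x = x`. -/
theorem iterate_stabilizes_and_infty_properties
    {X : Type u} [TopologicalSpace X] [Finite X] [T0Space X]
    (f : C(X, X)) (hf : ∀ x, specLE (f x) x) :
    (∃ N : ℕ, (⇑f)^[N + 1] = (⇑f)^[N]) ∧
    ∀ N : ℕ, (⇑f)^[N + 1] = (⇑f)^[N] →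
      (∀ x, specLE ((⇑f)^[N] x) (f x)) ∧
      (∀ x, specLE (f x) x) ∧
      (∀ x, (⇑f)^[N] ((⇑f)^[N] x) = (⇑f)^[N] x) ∧
      IsDbpRetract (Set.univ : Set X) (Set.range ((⇑f)^[N])) ∧
      (∀ x, x ∈ Set.range ((⇑f)^[N]) ↔ f x = x) := by
  -- basic chain facts
  have chain0 : ∀ (n : ℕ) (x : X), specLE ((⇑f)^[n] x) x := by
    intro n
    induction n with
    | zero => exact fun x => specLE_refl x
    | succ n ih =>
      intro x
      rw [Function.iterate_succ_apply']
      exact specLE_trans (hf _) (ih x)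
  have chain : ∀ (k j : ℕ) (x : X), specLE ((⇑f)^[k + j] x) ((⇑f)^[k] x) := by
    intro k j x
    rw [Nat.add_comm, Function.iterate_add_apply]
    exact chain0 j _
  constructor
  · -- existence: pigeonhole on the finite function space
    obtain ⟨m, n, hmn, heq⟩ :=
      Finite.exists_ne_map_eq_of_infinite (fun k : ℕ => (⇑f)^[k])
    wlog hlt : m < n generalizing m n
    · exact this n m hmn.symm heq.symm (by omega)
    refine ⟨m, funext fun x => ?_⟩
    have h1 : specLE ((⇑f)^[m + 1] x) ((⇑f)^[m] x) := chain m 1 x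
    have h2 : specLE ((⇑f)^[m] x) ((⇑f)^[m + 1] x) := by
      have : (⇑f)^[m] x = (⇑f)^[n] x := congrFun heq x
      rw [this, show n = (m + 1) + (n - m - 1) by omega]
      exact chain (m + 1) (n - m - 1) x
    exact specLE_antisymm h1 h2
  · intro N hN
    have stab : ∀ k : ℕ, (⇑f)^[N + k] = (⇑f)^[N] := by
      intro k
      induction k with
      | zero => rfl
      | succ k ih =>
        have : (⇑f)^[N + (k + 1)] = (⇑f)^[N + k + 1] := by ring_nf
        rw [this, Function.iterate_succ, ih, ← Function.iterate_succ, hN]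
    have hidem : ∀ x, (⇑f)^[N] ((⇑f)^[N] x) = (⇑f)^[N] x := by
      intro x
      rw [← Function.iterate_add_apply, stab N]
    have hfix : ∀ x, x ∈ Set.range ((⇑f)^[N]) ↔ f x = x := by
      intro x
      constructor
      · rintro ⟨y, rfl⟩
        calc f ((⇑f)^[N] y) = (⇑f)^[N + 1] y := (Function.iterate_succ_apply' f N y).symm
          _ = (⇑f)^[N] y := by rw [hN]
      · intro h
        exact ⟨x, Function.iterate_fixed h N⟩
    refine ⟨?_, hf, hidem, ?_, hfix⟩
    · intro x
      have h1 : (⇑f)^[N] x = (⇑f)^[N] (f x) := by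
        rw [← Function.iterate_succ_apply, hN]
      rw [h1]
      exact chain0 N (f x)
    · refine dbp_aux (⇑f)^[N] (chain0 N)
        (fun a b h => specLE_mono (f.continuous.iterate N) h) hidem
        (Set.univ \ Set.range (⇑f)^[N]).ncard Set.univ le_rfl (Set.subset_univ _)
end

section
/- Let X be a topological space and let A be a finite subspace of X. Then a subset C of the subspace X × {0} ∪ A × [0,1] of X × [0,1] is open in X × {0} ∪ A × [0,1] if and only if C ∩ (X × {0}) is open in X × {0} and C ∩ (A × [0,1]) is open in A × [0,1]. -/
open unitInterval

set_option autoImplicit false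

universe u v

/-- Let `X` be a topological space and `A` a finite subspace of `X`.
A subset `C` of `X × {0} ∪ A × I` is open in `X × {0} ∪ A × I` iff `C ∩ (X × {0})` is
open in `X × {0}` and `C ∩ (A × I)` is open in `A × I`. -/
theorem open_in_union_iff_open_in_pieces
    {X : Type u} [TopologicalSpace X] (A : Set X) (hA : A.Finite)
    (C : Set (X × I)) (hC : C ⊆ {p : X × I | p.2 = 0 ∨ p.1 ∈ A}) :
    IsOpen (Subtype.val ⁻¹' C : Set {p : X × I | p.2 = 0 ∨ p.1 ∈ A}) ↔
      IsOpen (Subtype.val ⁻¹' C : Set {p : X × I | p.2 = 0}) ∧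
      IsOpen (Subtype.val ⁻¹' C : Set {p : X × I | p.1 ∈ A}) := by
  constructor
  · intro h
    constructor
    · have : Continuous (fun q : {p : X × I | p.2 = 0} =>
          (⟨q.1, Or.inl q.2⟩ : {p : X × I | p.2 = 0 ∨ p.1 ∈ A})) :=
        Continuous.subtype_mk continuous_subtype_val _
      exact h.preimage this
    · have : Continuous (fun q : {p : X × I | p.1 ∈ A} =>
          (⟨q.1, Or.inr q.2⟩ : {p : X × I | p.2 = 0 ∨ p.1 ∈ A})) :=
        Continuous.subtype_mk continuous_subtype_val _
      exact h.preimage this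
  · rintro ⟨h0, h1⟩
    obtain ⟨O₀, hO₀open, hO₀⟩ := isOpen_induced_iff.mp h0
    obtain ⟨O₁, hO₁open, hO₁⟩ := isOpen_induced_iff.mp h1
    have e0 : ∀ q : X × I, q.2 = 0 → (q ∈ O₀ ↔ q ∈ C) := fun q hq =>
      Set.ext_iff.mp hO₀ ⟨q, hq⟩
    have e1 : ∀ q : X × I, q.1 ∈ A → (q ∈ O₁ ↔ q ∈ C) := fun q hq =>
      Set.ext_iff.mp hO₁ ⟨q, hq⟩
    rw [isOpen_iff_forall_mem_open]
    rintro ⟨p, hpW⟩ hpC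
    simp only [Set.mem_preimage] at hpC
    suffices h : ∃ O : Set (X × I), IsOpen O ∧ p ∈ O ∧
        ∀ q ∈ O, (q.2 = 0 ∨ q.1 ∈ A) → q ∈ C by
      obtain ⟨O, hOopen, hpO, hsub⟩ := h
      exact ⟨Subtype.val ⁻¹' O, fun q hq => hsub q.1 hq q.2,
        hOopen.preimage continuous_subtype_val, hpO⟩
    by_cases hp2 : p.2 = 0
    · -- the point lies on the bottom
      set F : Set X := {a | a ∈ A ∧ ((a, (0 : I)) : X × I) ∈ C} with hFdef
      have hF : F.Finite := hA.subset fun a ha => ha.1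
      have key : ∀ a : X, ∃ (u : Set X) (v : Set I), IsOpen u ∧ IsOpen v ∧ (0 : I) ∈ v ∧
          (a ∈ F → a ∈ u ∧ ∀ q : X × I, q.1 ∈ u → q.2 ∈ v → q.1 ∈ A → q ∈ C) := by
        intro a
        by_cases haF : a ∈ F
        · have h01 : ((a, (0 : I)) : X × I) ∈ O₁ := (e1 _ haF.1).mpr haF.2
          obtain ⟨u, v, hu, hv, hau, h0v, huv⟩ := isOpen_prod_iff.mp hO₁open a 0 h01
          exact ⟨u, v, hu, hv, h0v, fun _ => ⟨hau, fun q hq1 hq2 hqA =>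
            (e1 q hqA).mp (huv (Set.mem_prod.mpr ⟨hq1, hq2⟩))⟩⟩
        · exact ⟨Set.univ, Set.univ, isOpen_univ, isOpen_univ, trivial,
            fun h => absurd h haF⟩
      choose u v huo hvo h0v hkey using key
      set U : Set X := {y | ((y, (0 : I)) : X × I) ∈ O₀} with hUdef
      have hUopen : IsOpen U :=
        hO₀open.preimage (continuous_id.prodMk continuous_const)
      have hU : ∀ y : X, y ∈ U ↔ ((y, (0 : I)) : X × I) ∈ C := fun y =>
        e0 (y, 0) rfl
      refine ⟨(Prod.fst ⁻¹' U) ∩ ⋂ a ∈ F, ((Prod.snd ⁻¹' v a) ∪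
        (Prod.fst ⁻¹' (closure {a})ᶜ)), ?_, ?_, ?_⟩
      · exact (hUopen.preimage continuous_fst).inter (hF.isOpen_biInter fun a _ =>
          ((hvo a).preimage continuous_snd).union
            (isClosed_closure.isOpen_compl.preimage continuous_fst))
      · constructor
        · have : ((p.1, (0 : I)) : X × I) ∈ C := by
            have : p = (p.1, (0 : I)) := Prod.ext rfl hp2
            rwa [← this]
          exact (hU p.1).mpr this
        · refine Set.mem_iInter₂.mpr fun a _ => Or.inl ?_
          show p.2 ∈ v a
          rw [hp2]; exact h0v a
      · rintro q ⟨hqU, hq2⟩ hdisj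
        have hq0C : ((q.1, (0 : I)) : X × I) ∈ C := (hU q.1).mp hqU
        by_cases hqA : q.1 ∈ A
        · have hqF : q.1 ∈ F := ⟨hqA, hq0C⟩
          have := Set.mem_iInter₂.mp hq2 q.1 hqF
          rcases this with hv | hcl
          · exact (hkey q.1 hqF).2 q (hkey q.1 hqF).1 hv hqA
          · exact absurd (subset_closure (Set.mem_singleton q.1)) hcl
        · have hq20 : q.2 = 0 := hdisj.resolve_right hqA
          have : q = (q.1, (0 : I)) := Prod.ext rfl hq20
          rwa [this]
    · -- the point has positive height, hence lies over A
      have hp1A : p.1 ∈ A := hpW.resolve_left hp2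
      refine ⟨O₁ ∩ (Prod.snd ⁻¹' {(0 : I)}ᶜ), hO₁open.inter
        (isOpen_compl_singleton.preimage continuous_snd), ⟨(e1 p hp1A).mpr hpC, hp2⟩, ?_⟩
      rintro q ⟨hq1, hq2⟩ hdisj
      exact (e1 q (hdisj.resolve_left hq2)).mp hq1
end

section
/- Let X be a connected non-empty finite topological space and let A be a non-empty closed subspace of X. If the inclusion i : A → X is a Hurewicz cofibration, then A = X. -/
open unitInterval

set_option autoImplicit false

universe u v

section Aux


/-- Continuous maps preserve specialization. -/
theorem specLE_map' {X Y : Type*} [TopologicalSpace X] [TopologicalSpace Y]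
    {f : X → Y} (hf : Continuous f) {x y : X}
    (h : ∀ U : Set X, IsOpen U → y ∈ U → x ∈ U) :
    ∀ U : Set Y, IsOpen U → f y ∈ U → f x ∈ U :=
  fun U hU hyU => h _ (hU.preimage hf) hyU

end Aux

/-- Let `X` be a connected non-empty finite topological space and `A`
a non-empty closed subspace. If the inclusion `i : A ↪ X` is a Hurewicz cofibration,
then `A = X`. -/
theorem closed_cofibration_implies_eq_univ
    {X : Type u} [TopologicalSpace X] [Finite X] [ConnectedSpace X]
    (A : Set X) (hA : A.Nonempty) (hclosed : IsClosed A)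
    (hcof : IsCofibration (⟨Subtype.val, continuous_subtype_val⟩ : C(A, X))) :
    A = Set.univ := by
  classical
  haveI : Small.{0} X := by
    obtain ⟨n, ⟨eX⟩⟩ := Finite.exists_equiv_fin X
    exact ⟨⟨Fin n, ⟨eX⟩⟩⟩
  -- Shrink X to Type 0 with the transported topology
  letI tS : TopologicalSpace (Shrink.{0} X) :=
    TopologicalSpace.induced ((equivShrink X).symm : Shrink.{0} X → X) (inferInstance : TopologicalSpace X)
  let h : X ≃ₜ Shrink.{0} X :=
    { equivShrink X with
      continuous_toFun := by
        rw [continuous_induced_rng]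
        simpa [Function.comp_def] using continuous_id'
      continuous_invFun := continuous_induced_dom }
  -- The mapping cylinder-type subspace, landing in Type v via ULift
  let Z0 : Type := {p : Shrink.{0} X × I // p.2 = 0 ∨ h.symm p.1 ∈ A}
  obtain ⟨G, hG0, hGA⟩ := hcof (ULift Z0)
    ⟨fun x => ⟨⟨(h x, 0), Or.inl rfl⟩⟩,
      continuous_uliftUp.comp <| Continuous.subtype_mk
        (h.continuous.prodMk continuous_const) _⟩
    ⟨fun p => ⟨⟨(h p.1.1, p.2), Or.inr (by simp)⟩⟩,
      continuous_uliftUp.comp <| Continuous.subtype_mk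
        ((h.continuous.comp (continuous_subtype_val.comp continuous_fst)).prodMk
          continuous_snd) _⟩
    (fun a => rfl)
  simp only [ContinuousMap.coe_mk] at hG0 hGA
  -- The retraction r : X × I → X × I
  let r : X × I → X × I := fun p => (h.symm ((G p).down.val.1), (G p).down.val.2)
  have hr : Continuous r := by
    have hGc : Continuous fun p : X × I => ((G p).down.val : Shrink.{0} X × I) :=
      continuous_subtype_val.comp (continuous_uliftDown.comp G.continuous)
    exact (h.symm.continuous.comp (continuous_fst.comp hGc)).prodMk
      (continuous_snd.comp hGc)
  have hr0 : ∀ x : X, r (x, 0) = (x, 0) := by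
    intro x
    simp only [r, hG0 x, ContinuousMap.coe_mk]
    exact Prod.ext (h.symm_apply_apply x) rfl
  have hrA : ∀ (a : A) (t : I), r ((a : X), t) = ((a : X), t) := by
    intro a t
    simp only [r, hGA a t, ContinuousMap.coe_mk]
    exact Prod.ext (h.symm_apply_apply _) rfl
  have hrZ : ∀ p : X × I, (r p).2 = 0 ∨ (r p).1 ∈ A := by
    intro p
    rcases (G p).down.property with h1 | h2
    · exact Or.inl h1
    · exact Or.inr h2
  -- key claim : A is "down-closed", i.e. open
  have key : ∀ a ∈ A, ∀ x : X, specLE x a → x ∈ A := by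
    intro a ha x hxa
    by_contra hx
    -- (x, t) specializes (a, t)
    have hpair : ∀ t : I, specLE (X := X × I) (x, t) (a, t) := by
      intro t U hU hmem
      obtain ⟨V, W, hV, hW, haV, htW, hVW⟩ := isOpen_prod_iff.1 hU a t hmem
      exact hVW ⟨hxa V hV haV, htW⟩
    -- second coordinate of r (x, t) is t
    have hsnd : ∀ t : I, (r (x, t)).2 = t := by
      intro t
      have hs : specLE (r (x, t)) (r (a, t)) := specLE_map' hr (hpair t)
      rw [hrA ⟨a, ha⟩ t] at hs
      have hs2 : specLE (r (x, t)).2 t :=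
        specLE_map' continuous_snd hs
      by_contra hne
      exact (hne (hs2 {(r (x, t)).2}ᶜ isOpen_compl_singleton
        (fun c => hne c.symm) rfl).elim)
    -- the path
    let φ : I → X := fun t => (r (x, t)).1
    have hφc : Continuous φ := continuous_fst.comp (hr.comp (Continuous.prodMk_right x))
    have hφ0 : φ 0 = x := by
      show (r (x, 0)).1 = x
      rw [hr0 x]
    have hφt : ∀ t : I, t ≠ 0 → φ t ∈ A := by
      intro t ht
      rcases hrZ (x, t) with h1 | h2
      · exact absurd (by rw [hsnd t] at h1; exact h1) ht
      · exact h2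
    have hSc : ({(0 : I)} : Set I) = (φ ⁻¹' A)ᶜ := by
      ext t
      simp only [Set.mem_singleton_iff, Set.mem_compl_iff, Set.mem_preimage]
      constructor
      · rintro rfl
        rw [hφ0]; exact hx
      · intro hmem
        by_contra ht
        exact hmem (hφt t ht)
    have hclopen : IsClopen ({(0 : I)} : Set I) :=
      ⟨isClosed_singleton, hSc ▸ (hclosed.preimage hφc).isOpen_compl⟩
    have := hclopen.eq_univ ⟨0, rfl⟩
    have h1 : (1 : I) ∈ ({(0 : I)} : Set I) := this ▸ Set.mem_univ _
    have : (1 : ℝ) = 0 := congrArg Subtype.val h1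
    norm_num at this
  -- A is open
  have hopen : IsOpen A := by
    rw [isOpen_iff_forall_mem_open]
    intro a ha
    refine ⟨minOpen a, ?_, ?_, ?_⟩
    · intro x hxm
      exact key a ha x (fun U hU haU => hxm U ⟨hU, haU⟩)
    · exact Set.Finite.isOpen_sInter (Set.toFinite _) (fun U hU => hU.1)
    · exact fun U hU => hU.2
  exact IsClopen.eq_univ ⟨hclosed, hopen⟩ hA
end

section
/- Let X and Y be non-empty connected finite topological spaces and let f : X → Y be a Hurewicz cofibration which is a closed map (equivalently, whose image is closed, f being an embedding). Then f is a homeomorphism. -/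
open unitInterval

set_option autoImplicit false

universe u v

section AuxProof

universe w

open Set in
/-- The (coinduced) topology on `Shrink α`. -/
noncomputable def shrinkTopAux (α : Type u) [t : TopologicalSpace α] [Small.{w} α] :
    TopologicalSpace (Shrink.{w} α) :=
  t.coinduced (equivShrink α)

/-- `equivShrink` as a homeomorphism for the coinduced topology. -/
noncomputable def shrinkHomeoAux (α : Type u) [t : TopologicalSpace α] [Small.{w} α] :
    @Homeomorph α (Shrink.{w} α) t (shrinkTopAux.{u, w} α) :=
  letI := shrinkTopAux.{u, w} α
  Equiv.toHomeomorphOfContinuousOpen (equivShrink α) continuous_coinduced_rng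
    (fun U hU => by
      have h2 : (⇑(equivShrink α)) ⁻¹' ((equivShrink α) '' U) = U := by
        ext a; simp
      show @IsOpen _ (t.coinduced (equivShrink α)) _
      rw [isOpen_coinduced, h2]
      exact hU)

/-- The topology of the non-Hausdorff mapping cylinder of height one:
on `Y ⊕ X`, a set is open iff both traces are open and together with `inr x`
it contains `inl (f x)`. -/
def cylTopAux {X : Type u} {Y : Type u} [TopologicalSpace X] [TopologicalSpace Y]
    (f : X → Y) : TopologicalSpace (Y ⊕ X) where
  IsOpen W := IsOpen (Sum.inl ⁻¹' W) ∧ IsOpen (Sum.inr ⁻¹' W) ∧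
    ∀ x, Sum.inr x ∈ W → Sum.inl (f x) ∈ W
  isOpen_univ := ⟨isOpen_univ, isOpen_univ, fun _ _ => trivial⟩
  isOpen_inter s t hs ht :=
    ⟨hs.1.inter ht.1, hs.2.1.inter ht.2.1, fun x hx => ⟨hs.2.2 x hx.1, ht.2.2 x hx.2⟩⟩
  isOpen_sUnion S hS := by
    refine ⟨?_, ?_, ?_⟩
    · rw [Set.preimage_sUnion]; exact isOpen_biUnion fun s hs => (hS s hs).1
    · rw [Set.preimage_sUnion]; exact isOpen_biUnion fun s hs => (hS s hs).2.1
    · rintro x ⟨s, hs, hxs⟩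
      exact ⟨s, hs, (hS s hs).2.2 x hxs⟩

/-- Core of the surjectivity argument: if a closed non-empty subset `C` of a finite
connected space `Y` admits a retraction `ρ` of `Y × I` onto `Y × {0} ∪ C × I`
(rel `Y × {0}` and `C × I`), then `C` is everything. -/
theorem surjCoreAux {Y : Type u} [TopologicalSpace Y] [Finite Y] [ConnectedSpace Y]
    (C : Set Y) (hC : IsClosed C) (hne : C.Nonempty)
    (ρ : Y × I → Y × I) (hρ : Continuous ρ)
    (h0 : ∀ y, ρ (y, 0) = (y, 0))
    (hc : ∀ c ∈ C, ∀ t, ρ (c, t) = (c, t))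
    (hr : ∀ p, (ρ p).2 = 0 ∨ (ρ p).1 ∈ C) :
    C = Set.univ := by
  have key : ∀ c ∈ C, ∀ z : Y, z ⤳ c → z ∈ C := by
    intro c hcC z hz
    have hsnd : ∀ t : I, (ρ (z, t)).2 = t := by
      intro t
      have h2 : ρ (z, t) ⤳ ρ (c, t) := (hz.prod specializes_rfl).map hρ
      rw [hc c hcC t] at h2
      exact (h2.map continuous_snd).eq
    set q : ℝ → I := Set.projIcc 0 1 zero_le_one with hq
    have hsub : Set.Ioi (0 : ℝ) ⊆ (fun s => (ρ (z, q s)).1) ⁻¹' C := by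
      intro s hs
      rcases hr (z, q s) with h | h
      · exfalso
        rw [hsnd (q s)] at h
        have hval : (q s : ℝ) = 0 := congrArg Subtype.val h
        have hpos : (0 : ℝ) < (q s : ℝ) := by
          simp only [hq, Set.projIcc]
          exact lt_max_iff.mpr (Or.inr (lt_min one_pos hs))
        exact absurd hval (ne_of_gt hpos)
      · exact h
    have hcont : Continuous fun s : ℝ => (ρ (z, q s)).1 :=
      (hρ.comp (continuous_const.prodMk continuous_projIcc)).fst
    have h0mem : (0 : ℝ) ∈ (fun s : ℝ => (ρ (z, q s)).1) ⁻¹' C := by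
      have hcl : IsClosed ((fun s : ℝ => (ρ (z, q s)).1) ⁻¹' C) := hC.preimage hcont
      have := (hcl.closure_subset_iff).mpr hsub
      exact this (by rw [closure_Ioi]; exact Set.self_mem_Ici)
    have hq0 : q 0 = (0 : I) := Subtype.ext (by simp [hq, Set.projIcc])
    have : (ρ (z, q 0)).1 ∈ C := h0mem
    rw [hq0, h0 z] at this
    exact this
  have hopen : IsOpen C := by
    have hCeq : C = ⋃ c ∈ C, ⋂₀ {U : Set Y | IsOpen U ∧ c ∈ U} := by
      apply Set.Subset.antisymm
      · intro c hcC
        exact Set.mem_biUnion hcC (fun U hU => hU.2)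
      · intro z hz
        rcases Set.mem_iUnion₂.mp hz with ⟨c, hcC, hzc⟩
        exact key c hcC z (specializes_iff_forall_open.mpr
          (fun U hU hcU => Set.mem_sInter.mp hzc U ⟨hU, hcU⟩))
    rw [hCeq]
    exact isOpen_biUnion fun c _ => (Set.toFinite _).isOpen_sInter fun U hU => hU.1
  exact (IsClopen.eq_univ ⟨hC, hopen⟩ hne)

/-- Universe-explicit version of the main theorem. -/
theorem mainAux {X : Type u} {Y : Type u} [TopologicalSpace X] [TopologicalSpace Y]
    [Finite X] [Finite Y] [ConnectedSpace X] [ConnectedSpace Y]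
    (f : C(X, Y)) (hcof : IsCofibration.{w, u, u} f) (hclosed : IsClosedMap f) :
    ∃ e : X ≃ₜ Y, ⇑e = ⇑f := by
  have hXne : Nonempty X := inferInstance
  set C : Set Y := Set.range f with hCdef
  have hCclosed : IsClosed C := hclosed.isClosed_range
  -- Surjectivity
  have hsurj : Function.Surjective f := by
    letI tZ := shrinkTopAux.{u, w} {p : Y × I // p.2 = 0 ∨ p.1 ∈ C}
    let e := shrinkHomeoAux.{u, w} {p : Y × I // p.2 = 0 ∨ p.1 ∈ C}
    let g : C(Y, Shrink.{w} {p : Y × I // p.2 = 0 ∨ p.1 ∈ C}) :=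
      ⟨fun y => e ⟨(y, 0), Or.inl rfl⟩,
        e.continuous.comp (Continuous.subtype_mk (continuous_id.prodMk continuous_const) _)⟩
    let H : C(X × I, Shrink.{w} {p : Y × I // p.2 = 0 ∨ p.1 ∈ C}) :=
      ⟨fun p => e ⟨(f p.1, p.2), Or.inr ⟨p.1, rfl⟩⟩,
        e.continuous.comp (Continuous.subtype_mk
          ((f.continuous.comp continuous_fst).prodMk continuous_snd) _)⟩
    obtain ⟨G, hG0, hG1⟩ := hcof (Shrink.{w} {p : Y × I // p.2 = 0 ∨ p.1 ∈ C}) g H (fun a => rfl)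
    let ρ : Y × I → Y × I := fun p => ((e.symm (G p)) : {p : Y × I // p.2 = 0 ∨ p.1 ∈ C}).val
    have hρ : Continuous ρ :=
      continuous_subtype_val.comp (e.symm.continuous.comp G.continuous)
    have h0 : ∀ y, ρ (y, 0) = (y, 0) := by
      intro y
      show (((e.symm (G (y, 0)))) : {p : Y × I // p.2 = 0 ∨ p.1 ∈ C}).val = (y, 0)
      rw [hG0 y]
      show ((e.symm (e ⟨(y, 0), Or.inl rfl⟩)) :
        {p : Y × I // p.2 = 0 ∨ p.1 ∈ C}).val = (y, 0)
      rw [Homeomorph.symm_apply_apply]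
    have hcfix : ∀ c ∈ C, ∀ t, ρ (c, t) = (c, t) := by
      rintro c ⟨x, rfl⟩ t
      show (((e.symm (G (f x, t)))) : {p : Y × I // p.2 = 0 ∨ p.1 ∈ C}).val = (f x, t)
      rw [hG1 x t]
      show ((e.symm (e ⟨(f x, t), Or.inr ⟨x, rfl⟩⟩)) :
        {p : Y × I // p.2 = 0 ∨ p.1 ∈ C}).val = (f x, t)
      rw [Homeomorph.symm_apply_apply]
    have hr : ∀ p, (ρ p).2 = 0 ∨ (ρ p).1 ∈ C := fun p => (e.symm (G p)).2
    have hCuniv : C = Set.univ :=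
      surjCoreAux C hCclosed (Set.range_nonempty f) ρ hρ h0 hcfix hr
    exact Set.range_eq_univ.mp hCuniv
  -- Injectivity
  have hinj : Function.Injective f := by
    intro x₁ x₂ hfx
    by_contra hnex
    letI tS : TopologicalSpace (Y ⊕ X) := cylTopAux f
    letI tZ := shrinkTopAux.{u, w} (Y ⊕ X)
    let e := shrinkHomeoAux.{u, w} (Y ⊕ X)
    have hinl : Continuous (Sum.inl : Y → Y ⊕ X) := continuous_def.mpr fun W hW => hW.1
    have h01 : (0 : I) ≠ 1 := fun h => zero_ne_one (congrArg Subtype.val h)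
    have hHcont : Continuous
        (fun p : X × I => if p.2 = 1 then (Sum.inr p.1 : Y ⊕ X) else Sum.inl (f p.1)) := by
      rw [continuous_def]
      intro W hW
      have hset : (fun p : X × I => if p.2 = 1 then (Sum.inr p.1 : Y ⊕ X) else Sum.inl (f p.1))
            ⁻¹' W
          = ((Sum.inr ⁻¹' W) ×ˢ (Set.univ : Set I))
            ∪ ((fun x => f x) ⁻¹' (Sum.inl ⁻¹' W)) ×ˢ {t : I | t ≠ 1} := by
        ext ⟨x, t⟩
        simp only [Set.mem_preimage, Set.mem_union, Set.mem_prod, Set.mem_univ, and_true,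
          Set.mem_setOf_eq]
        constructor
        · intro h
          by_cases ht : t = 1
          · rw [if_pos ht] at h; exact Or.inl h
          · rw [if_neg ht] at h; exact Or.inr ⟨h, ht⟩
        · rintro (h | ⟨h, ht⟩)
          · by_cases ht : t = 1
            · rwa [if_pos ht]
            · rw [if_neg ht]; exact hW.2.2 x h
          · rwa [if_neg ht]
      rw [hset]
      exact ((hW.2.1.prod isOpen_univ).union ((hW.1.preimage f.continuous).prod isOpen_ne))
    let g : C(Y, Shrink.{w} (Y ⊕ X)) := ⟨fun y => e (Sum.inl y), e.continuous.comp hinl⟩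
    let H : C(X × I, Shrink.{w} (Y ⊕ X)) :=
      ⟨fun p => e (if p.2 = 1 then Sum.inr p.1 else Sum.inl (f p.1)),
        e.continuous.comp hHcont⟩
    obtain ⟨G, hG0, hG1⟩ := hcof (Shrink.{w} (Y ⊕ X)) g H
      (fun a => by show e _ = e _; rw [if_neg h01])
    have h1 := hG1 x₁ 1
    have h2 := hG1 x₂ 1
    rw [hfx] at h1
    rw [h1] at h2
    exact hnex (by simpa [H] using h2)
  have hbij : Function.Bijective f := ⟨hinj, hsurj⟩
  have hopenmap : IsOpenMap f := by
    intro U hU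
    rw [← isClosed_compl_iff, ← Set.image_compl_eq hbij]
    exact hclosed _ hU.isClosed_compl
  exact ⟨Equiv.toHomeomorphOfContinuousOpen (Equiv.ofBijective f hbij)
    f.continuous hopenmap, rfl⟩

end AuxProof

/-- A closed Hurewicz cofibration between non-empty connected finite
topological spaces is a homeomorphism. -/
theorem closed_cofibration_is_homeomorphism
    {X : Type u} {Y : Type u} [TopologicalSpace X] [TopologicalSpace Y]
    [Finite X] [Finite Y] [ConnectedSpace X] [ConnectedSpace Y]
    (f : C(X, Y)) (hcof : IsCofibration f) (hclosed : IsClosedMap f) :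
    ∃ e : X ≃ₜ Y, ⇑e = ⇑f :=
  mainAux f hcof hclosed
end

section
/- Let X be a connected non-empty finite topological space and let x₀ ∈ X. Then the inclusion {x₀} ↪ X is a Hurewicz cofibration (i.e. (X, x₀) is well-pointed) if and only if x₀ ≤ x in the specialization preorder for every x ∈ X. In particular, if X is moreover T₀, then (X, x₀) is well-pointed if and only if x₀ is the minimum of X in the specialization order. -/
open unitInterval

set_option autoImplicit false

universe u v

section Aux

lemma specLE_map {α β : Type*} [TopologicalSpace α] [TopologicalSpace β] {f : α → β}
    (hf : Continuous f) {a b : α} (h : specLE a b) : specLE (f a) (f b) :=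
  fun U hU hb => h _ (hU.preimage hf) hb

lemma specLE_eq_of_t1 {α : Type*} [TopologicalSpace α] [T1Space α] {a b : α}
    (h : specLE a b) : a = b := by
  by_contra hne
  exact (h {a}ᶜ isClosed_singleton.isOpen_compl (Ne.symm hne)) rfl

lemma exists_ne_zero_mem_of_isOpen {J : Set I} (hJ : IsOpen J) (h0 : (0 : I) ∈ J) :
    ∃ t ∈ J, t ≠ (0 : I) := by
  by_contra hcon
  push_neg at hcon
  have hJ0 : J = {(0 : I)} := Set.eq_singleton_iff_unique_mem.mpr ⟨h0, hcon⟩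
  have hclopen : IsClopen ({(0 : I)} : Set I) := ⟨isClosed_singleton, hJ0 ▸ hJ⟩
  have huniv : ({(0 : I)} : Set I) = Set.univ := hclopen.eq_univ ⟨0, rfl⟩
  have h1 : (1 : I) ∈ ({(0 : I)} : Set I) := huniv ▸ Set.mem_univ _
  have h2 : (1 : ℝ) = 0 := congrArg Subtype.val h1
  exact one_ne_zero h2

end Aux

/-- Let `X` be a connected non-empty finite topological space and
`x₀ ∈ X`. Then `(X, x₀)` is well-pointed (the inclusion `{x₀} ↪ X` is a Hurewicz
cofibration) iff `x₀ ≤ x` in the specialization preorder for every `x ∈ X`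
(for `X` T₀ this says exactly that `x₀` is the minimum of `X`). -/
theorem wellPointed_iff_min
    {X : Type u} [TopologicalSpace X] [Finite X] [ConnectedSpace X] (x₀ : X) :
    IsCofibration (⟨Subtype.val, continuous_subtype_val⟩ : C(({x₀} : Set X), X)) ↔
      ∀ x : X, specLE x₀ x :=  by
  classical
  constructor
  · -- forward direction
    intro hc x
    set n := Nat.card X with hn
    let e : X ≃ Fin n := Finite.equivFin X
    letI tF : TopologicalSpace (Fin n) := TopologicalSpace.induced e.symm ‹TopologicalSpace X›
    have hce : Continuous (e : X → Fin n) := by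
      rw [continuous_induced_rng]
      have : (⇑e.symm ∘ ⇑e) = id := funext fun y => e.symm_apply_apply y
      rw [this]; exact continuous_id
    have hces : Continuous (e.symm : Fin n → X) := continuous_induced_dom
    let W : Set (Fin n × I) := {p | p.2 = 0 ∨ p.1 = e x₀}
    let f₀ : C(X, ULift ↥W) :=
      ⟨fun y => ⟨⟨(e y, 0), Or.inl rfl⟩⟩,
        Homeomorph.ulift.symm.continuous.comp
          (Continuous.subtype_mk (hce.prodMk continuous_const) _)⟩
    let H₀ : C((({x₀} : Set X)) × I, ULift ↥W) :=
      ⟨fun p => ⟨⟨(e x₀, p.2), Or.inr rfl⟩⟩,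
        Homeomorph.ulift.symm.continuous.comp
          (Continuous.subtype_mk (continuous_const.prodMk continuous_snd) _)⟩
    have hH₀ : ∀ a : ({x₀} : Set X), H₀ (a, 0) = f₀ ((a : X)) := by
      intro a
      have ha : (a : X) = x₀ := a.2
      apply congrArg ULift.up
      apply Subtype.ext
      simp [ha]
    obtain ⟨G, hG0, hGs⟩ := hc (ULift ↥W) f₀ H₀ hH₀
    let r : X × I → X × I := fun q => (e.symm ((G q).down.1.1), (G q).down.1.2)
    have c1 : Continuous fun q : X × I => ((G q).down : Fin n × I) :=
      continuous_subtype_val.comp (Homeomorph.ulift.continuous.comp G.continuous)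
    have hr_cont : Continuous r := (hces.comp c1.fst).prodMk c1.snd
    have hrW : ∀ q : X × I, (r q).2 = 0 ∨ (r q).1 = x₀ := by
      intro q
      rcases (G q).down.2 with h | h
      · exact Or.inl h
      · refine Or.inr ?_
        show e.symm ((G q).down.1.1) = x₀
        rw [h, e.symm_apply_apply]
    have hr0 : ∀ y : X, r (y, 0) = (y, 0) := by
      intro y
      show (e.symm ((G (y, 0)).down.1.1), (G (y, 0)).down.1.2) = (y, 0)
      rw [hG0 y]
      show (e.symm (e y), (0 : I)) = (y, 0)
      rw [e.symm_apply_apply]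
    have hrs : ∀ t : I, r (x₀, t) = (x₀, t) := by
      intro t
      have hh := hGs ⟨x₀, rfl⟩ t
      show (e.symm ((G (x₀, t)).down.1.1), (G (x₀, t)).down.1.2) = (x₀, t)
      have hx : ((⟨Subtype.val, continuous_subtype_val⟩ :
          C(({x₀} : Set X), X)) (⟨x₀, rfl⟩ : ({x₀} : Set X))) = x₀ := rfl
      rw [hx] at hh
      rw [hh]
      show (e.symm (e x₀), t) = (x₀, t)
      rw [e.symm_apply_apply]
    set S : Set X := {y | specLE x₀ y} with hS
    have hkey : ∀ y ∈ S, ∀ z : X, specLE z y → z ∈ S := by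
      intro y hy z hzy
      have hrt : ∀ w : X, ∀ t : I, specLE w y →
          ((r (w, t)).2 = (r (y, t)).2 ∧ specLE (r (w, t)).1 (r (y, t)).1) := by
        intro w t hwy
        have hcont : Continuous fun v : X => r (v, t) :=
          hr_cont.comp (continuous_id.prodMk continuous_const)
        have hsp : specLE (r (w, t)) (r (y, t)) := specLE_map hcont hwy
        exact ⟨specLE_eq_of_t1 (specLE_map continuous_snd hsp),
          specLE_map continuous_fst hsp⟩
      have hyt : ∀ t : I, t ≠ 0 → r (y, t) = (x₀, t) := by
        intro t ht
        have h2 : (r (y, t)).2 = t := by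
          have h := (hrt x₀ t hy).1
          rw [hrs t] at h
          exact h.symm
        have h1 : (r (y, t)).1 = x₀ := by
          rcases hrW (y, t) with h | h
          · exact absurd (h2 ▸ h) ht
          · exact h
        exact Prod.ext h1 h2
      have hzt : ∀ t : I, t ≠ 0 → r (z, t) = (x₀, t) := by
        intro t ht
        have h2 : (r (z, t)).2 = t := by
          have h := (hrt z t hzy).1
          rw [hyt t ht] at h
          exact h
        have h1 : (r (z, t)).1 = x₀ := by
          rcases hrW (z, t) with h | h
          · exact absurd (h2 ▸ h) ht
          · exact h
        exact Prod.ext h1 h2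
      intro U hU hzU
      have hVopen : IsOpen (U ×ˢ (Set.univ : Set I)) := hU.prod isOpen_univ
      have hpre : IsOpen (r ⁻¹' (U ×ˢ (Set.univ : Set I))) := hVopen.preimage hr_cont
      have hslice : IsOpen {t : I | (z, t) ∈ r ⁻¹' (U ×ˢ (Set.univ : Set I))} :=
        hpre.preimage (Continuous.prodMk_right z)
      have h0mem : (0 : I) ∈ {t : I | (z, t) ∈ r ⁻¹' (U ×ˢ (Set.univ : Set I))} := by
        show r (z, 0) ∈ U ×ˢ (Set.univ : Set I)
        rw [hr0 z]
        exact ⟨hzU, Set.mem_univ _⟩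
      obtain ⟨t, ht, htne⟩ := exists_ne_zero_mem_of_isOpen hslice h0mem
      have hmem : r (z, t) ∈ U ×ˢ (Set.univ : Set I) := ht
      rw [hzt t htne] at hmem
      exact hmem.1
    have hS_open : IsOpen S := by
      rw [isOpen_iff_forall_mem_open]
      intro y hy
      refine ⟨⋂₀ {V : Set X | IsOpen V ∧ y ∈ V}, ?_, ?_, ?_⟩
      · intro z hz
        have hzy : specLE z y := fun V hV hyV => Set.mem_sInter.mp hz V ⟨hV, hyV⟩
        exact hkey y hy z hzy
      · exact Set.Finite.isOpen_sInter (Set.toFinite _) (fun V hV => hV.1)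
      · exact Set.mem_sInter.mpr fun V hV => hV.2
    have hS_closed : IsClosed S := by
      rw [← isOpen_compl_iff, isOpen_iff_forall_mem_open]
      intro y hy
      simp only [Set.mem_compl_iff, hS, Set.mem_setOf_eq, specLE] at hy
      push_neg at hy
      obtain ⟨U, hU, hyU, hxU⟩ := hy
      exact ⟨U, fun w hw hs => hxU (hs U hU hw), hU, hyU⟩
    have huniv : S = Set.univ := IsClopen.eq_univ ⟨hS_closed, hS_open⟩ ⟨x₀, fun U _ h => h⟩
    have hx : x ∈ S := by rw [huniv]; trivial
    exact hx
  · -- backward direction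
    intro hmin Z _ f H hH
    let a₀ : ({x₀} : Set X) := ⟨x₀, rfl⟩
    let g : X × I → Z := fun p => if p.2 = 0 then f p.1 else H (a₀, p.2)
    have hg_cont : Continuous g := by
      rw [continuous_def]
      intro U hU
      set A : Set X := f ⁻¹' U with hA
      set B : Set I := (fun t : I => H (a₀, t)) ⁻¹' U with hB
      have hAopen : IsOpen A := hU.preimage f.continuous
      have hBopen : IsOpen B := hU.preimage (H.continuous.comp (Continuous.prodMk_right a₀))
      have hAB : A.Nonempty → (0 : I) ∈ B := by
        rintro ⟨w, hw⟩
        have hx₀A : x₀ ∈ A := hmin w A hAopen hw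
        show H (a₀, 0) ∈ U
        rw [hH a₀]
        exact hx₀A
      have heq : g ⁻¹' U = A ×ˢ B ∪ Set.univ ×ˢ (B ∩ {(0 : I)}ᶜ) := by
        ext ⟨p1, p2⟩
        simp only [Set.mem_preimage, Set.mem_union, Set.mem_prod, Set.mem_inter_iff,
          Set.mem_compl_iff, Set.mem_singleton_iff, Set.mem_univ, true_and, g]
        by_cases hp : p2 = 0
        · simp only [hp, if_pos rfl]
          constructor
          · intro h; exact Or.inl ⟨h, hAB ⟨p1, h⟩⟩
          · rintro (⟨h, _⟩ | ⟨_, h⟩)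
            · exact h
            · exact (h trivial).elim
        · simp only [if_neg hp]
          constructor
          · intro h; exact Or.inr ⟨h, hp⟩
          · rintro (⟨_, h⟩ | ⟨h, _⟩) <;> exact h
      rw [heq]
      exact (hAopen.prod hBopen).union
        (isOpen_univ.prod (hBopen.inter isClosed_singleton.isOpen_compl))
    refine ⟨⟨g, hg_cont⟩, ?_, ?_⟩
    · intro y
      show (if (0 : I) = 0 then f y else H (a₀, 0)) = f y
      rw [if_pos rfl]
    · intro a t
      have ha : a = a₀ := Subtype.ext a.2
      show (if t = 0 then f (a : X) else H (a₀, t)) = H (a, t)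
      by_cases ht : t = 0
      · rw [if_pos ht, ht, hH a]; rfl
      · rw [if_neg ht, ha]
end
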